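/- Let P₁ and P₂ be polytopes in ℝ² (each the convex hull of a nonempty finite set), with a point of P_i written as (x_i,t_i). Then conv{(x₁,x₂,t₁,t₂,μ) ∈ ℝ⁵ : μ = t₁t₂ and (x_i,t_i) ∈ P_i for i = 1,2} = conv{(x₁,x₂,t₁,t₂,μ) ∈ ℝ⁵ : μ = t₁t₂ and (x_i,t_i) is an extreme point of P_i for i = 1,2}. -/

import Mathlib

lemma poly_eq_hull_extreme (V : Finset (ℝ×ℝ)) (P : Set (ℝ×ℝ)) (hP : P = convexHull ℝ ↑V) :
    P = convexHull ℝ (P.extremePoints ℝ) := by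
  have hfin : (P.extremePoints ℝ).Finite := by
    apply Set.Finite.subset V.finite_toSet
    rw [hP]; exact extremePoints_convexHull_subset
  have hcomp : IsCompact P := hP ▸ V.finite_toSet.isCompact_convexHull (𝕜 := ℝ)
  have hconv : Convex ℝ P := hP ▸ convex_convexHull ℝ _
  have h := closure_convexHull_extremePoints hcomp hconv
  rw [((hfin.isCompact_convexHull (𝕜 := ℝ)).isClosed).closure_eq] at h
  exact h.symm

/-- The convex hull of the graph of the bilinear product `t₁ t₂` over a product of two
planar polytopes equals the convex hull of the (finitely many) points of the graph lying
over pairs of extreme points.  Points of `ℝ⁵` are written `(x₁, x₂, t₁, t₂, μ)`. -/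
theorem bilinear_over_product_of_polytopes_extreme_points
    (V1 V2 : Finset (ℝ × ℝ)) (hV1 : V1.Nonempty) (hV2 : V2.Nonempty)
    (P1 P2 : Set (ℝ × ℝ))
    (hP1 : P1 = convexHull ℝ (V1 : Set (ℝ × ℝ)))
    (hP2 : P2 = convexHull ℝ (V2 : Set (ℝ × ℝ))) :
    convexHull ℝ {p : ℝ × ℝ × ℝ × ℝ × ℝ |
        p.2.2.2.2 = p.2.2.1 * p.2.2.2.1 ∧ (p.1, p.2.2.1) ∈ P1 ∧ (p.2.1, p.2.2.2.1) ∈ P2} =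
      convexHull ℝ {p : ℝ × ℝ × ℝ × ℝ × ℝ |
        p.2.2.2.2 = p.2.2.1 * p.2.2.2.1 ∧
          (p.1, p.2.2.1) ∈ Set.extremePoints ℝ P1 ∧
          (p.2.1, p.2.2.2.1) ∈ Set.extremePoints ℝ P2} := by
  have hfin1 : (P1.extremePoints ℝ).Finite :=
    Set.Finite.subset V1.finite_toSet (hP1 ▸ extremePoints_convexHull_subset)
  have hfin2 : (P2.extremePoints ℝ).Finite :=
    Set.Finite.subset V2.finite_toSet (hP2 ▸ extremePoints_convexHull_subset)
  have hE1 : P1 = convexHull ℝ (P1.extremePoints ℝ) := poly_eq_hull_extreme V1 P1 hP1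
  have hE2 : P2 = convexHull ℝ (P2.extremePoints ℝ) := poly_eq_hull_extreme V2 P2 hP2
  apply Set.Subset.antisymm
  · apply convexHull_min _ (convex_convexHull ℝ _)
    rintro ⟨x1, x2, t1, t2, μ⟩ ⟨hμ, h1, h2⟩
    simp only [Set.mem_setOf_eq] at hμ h1 h2
    -- weights
    have hm1 : (x1, t1) ∈ convexHull ℝ (↑hfin1.toFinset : Set (ℝ × ℝ)) := by
      rw [hfin1.coe_toFinset, ← hE1]; exact h1
    have hm2 : (x2, t2) ∈ convexHull ℝ (↑hfin2.toFinset : Set (ℝ × ℝ)) := by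
      rw [hfin2.coe_toFinset, ← hE2]; exact h2
    obtain ⟨w1, hw1₀, hw1₁, hsum1⟩ := Finset.mem_convexHull'.mp hm1
    obtain ⟨w2, hw2₀, hw2₁, hsum2⟩ := Finset.mem_convexHull'.mp hm2
    set S1 := hfin1.toFinset
    set S2 := hfin2.toFinset
    have hx1 : ∑ v ∈ S1, w1 v * v.1 = x1 := by
      have := congrArg Prod.fst hsum1
      simpa [Prod.fst_sum] using this
    have ht1 : ∑ v ∈ S1, w1 v * v.2 = t1 := by
      have := congrArg Prod.snd hsum1
      simpa [Prod.snd_sum] using this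
    have hx2 : ∑ v ∈ S2, w2 v * v.1 = x2 := by
      have := congrArg Prod.fst hsum2
      simpa [Prod.fst_sum] using this
    have ht2 : ∑ v ∈ S2, w2 v * v.2 = t2 := by
      have := congrArg Prod.snd hsum2
      simpa [Prod.snd_sum] using this
    have key : ((S1 ×ˢ S2).centerMass (fun q => w1 q.1 * w2 q.2)
        (fun q => ((q.1.1, q.2.1, q.1.2, q.2.2, q.1.2 * q.2.2) : ℝ × ℝ × ℝ × ℝ × ℝ)))
        = (x1, x2, t1, t2, μ) := by
      rw [Finset.centerMass_eq_of_sum_1]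
      · rw [Finset.sum_product]
        ext <;>
          simp only [Prod.fst_sum, Prod.snd_sum, Prod.smul_mk, smul_eq_mul]
        · rw [← hx1]
          refine Finset.sum_congr rfl fun v _ => ?_
          rw [show (∑ q ∈ S2, w1 v * w2 q * v.1) = (w1 v * v.1) * ∑ q ∈ S2, w2 q by
            rw [Finset.mul_sum]; exact Finset.sum_congr rfl fun q _ => by ring]
          rw [hw2₁, mul_one]
        · rw [← hx2]
          rw [show (∑ v ∈ S2, w2 v * v.1) = (∑ v ∈ S1, w1 v) * ∑ v ∈ S2, w2 v * v.1 by
            rw [hw1₁, one_mul], Finset.sum_mul_sum]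
          exact Finset.sum_congr rfl fun v _ => Finset.sum_congr rfl fun q _ => by ring
        · rw [← ht1]
          refine Finset.sum_congr rfl fun v _ => ?_
          rw [show (∑ q ∈ S2, w1 v * w2 q * v.2) = (w1 v * v.2) * ∑ q ∈ S2, w2 q by
            rw [Finset.mul_sum]; exact Finset.sum_congr rfl fun q _ => by ring]
          rw [hw2₁, mul_one]
        · rw [← ht2]
          rw [show (∑ v ∈ S2, w2 v * v.2) = (∑ v ∈ S1, w1 v) * ∑ v ∈ S2, w2 v * v.2 by
            rw [hw1₁, one_mul], Finset.sum_mul_sum]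
          exact Finset.sum_congr rfl fun v _ => Finset.sum_congr rfl fun q _ => by ring
        · rw [hμ, ← ht1, ← ht2, Finset.sum_mul_sum]
          exact Finset.sum_congr rfl fun v _ =>
            Finset.sum_congr rfl fun q _ => by ring
      · rw [Finset.sum_product]
        simp_rw [← Finset.mul_sum, hw2₁, mul_one, hw1₁]
    rw [← key]
    apply Finset.centerMass_mem_convexHull
    · intro q hq
      exact mul_nonneg (hw1₀ _ (Finset.mem_product.mp hq).1) (hw2₀ _ (Finset.mem_product.mp hq).2)
    · rw [Finset.sum_product]
      simp only [← Finset.mul_sum, hw2₁, mul_one, hw1₁]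
      norm_num
    · intro q hq
      obtain ⟨hq1, hq2⟩ := Finset.mem_product.mp hq
      refine ⟨rfl, ?_, ?_⟩
      · simpa [S1] using hq1
      · simpa [S2] using hq2
  · apply convexHull_mono
    rintro p ⟨hμ, h1, h2⟩
    exact ⟨hμ, extremePoints_subset h1, extremePoints_subset h2⟩
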